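/- arXiv:1811.03197 — 5 statements merged into one kernel-verified Lean document; each statement's English description precedes it below -/
import Mathlib

section
/- Let n be a natural number, b > 0, and let c : (Fin n → ℝ) → ℝ be a bounded function. Then for all adjacent streams σ, σ' (i.e. d(σ, σ') = 1), SS_{σ',b}(c) ≤ exp(b) · SS_{σ,b}(c). Hence smooth sensitivity is a b-smooth upper bound on local sensitivity. -/
/-- Local sensitivity of `c` at `σ`: the supremum of `|c σ - c σ'|` over streams `σ'`
adjacent to `σ` (Hamming distance 1). -/
noncomputable def localSens {n : ℕ} (c : (Fin n → ℝ) → ℝ) (σ : Fin n → ℝ) : ℝ :=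
  sSup {x : ℝ | ∃ σ' : Fin n → ℝ, hammingDist σ σ' = 1 ∧ x = |c σ - c σ'|}

/-- `b`-smooth sensitivity of `c` at `σ`: the supremum of
`LS_{σ'}(c) · exp(-b · d(σ, σ'))` over all streams `σ'`. -/
noncomputable def smoothSens {n : ℕ} (b : ℝ) (c : (Fin n → ℝ) → ℝ) (σ : Fin n → ℝ) : ℝ :=
  sSup {x : ℝ | ∃ σ' : Fin n → ℝ, x = localSens c σ' * Real.exp (-(b * hammingDist σ σ'))}

lemma localSens_nonneg {n : ℕ} (c : (Fin n → ℝ) → ℝ) (σ : Fin n → ℝ) :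
    0 ≤ localSens c σ :=
  Real.sSup_nonneg (by rintro x ⟨τ, -, rfl⟩; exact abs_nonneg _)

lemma localSens_le {n : ℕ} (c : (Fin n → ℝ) → ℝ) (M : ℝ)
    (hM : ∀ σ : Fin n → ℝ, |c σ| ≤ M) (σ : Fin n → ℝ) :
    localSens c σ ≤ 2 * M := by
  have hM0 : 0 ≤ M := le_trans (abs_nonneg _) (hM σ)
  apply Real.sSup_le
  · rintro x ⟨τ, -, rfl⟩
    calc |c σ - c τ| ≤ |c σ| + |c τ| := abs_sub _ _
    _ ≤ M + M := add_le_add (hM σ) (hM τ)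
    _ = 2 * M := by ring
  · linarith

lemma smoothSens_bddAbove {n : ℕ} (b : ℝ) (hb : 0 < b) (c : (Fin n → ℝ) → ℝ) (M : ℝ)
    (hM : ∀ σ : Fin n → ℝ, |c σ| ≤ M) (σ : Fin n → ℝ) :
    BddAbove {x : ℝ | ∃ σ' : Fin n → ℝ,
      x = localSens c σ' * Real.exp (-(b * hammingDist σ σ'))} := by
  refine ⟨2 * M, ?_⟩
  rintro x ⟨τ, rfl⟩
  have h1 : Real.exp (-(b * hammingDist σ τ)) ≤ 1 := by
    apply Real.exp_le_one_iff.mpr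
    have : (0:ℝ) ≤ b * hammingDist σ τ := by positivity
    linarith
  calc localSens c τ * Real.exp (-(b * hammingDist σ τ))
      ≤ localSens c τ * 1 := by
        exact mul_le_mul_of_nonneg_left h1 (localSens_nonneg c τ)
    _ = localSens c τ := mul_one _
    _ ≤ 2 * M := localSens_le c M hM τ

lemma smoothSens_nonneg {n : ℕ} (b : ℝ) (c : (Fin n → ℝ) → ℝ) (σ : Fin n → ℝ) :
    0 ≤ smoothSens b c σ :=
  Real.sSup_nonneg (by
    rintro x ⟨τ, rfl⟩
    exact mul_nonneg (localSens_nonneg c τ) (Real.exp_pos _).le)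

/-- Smooth sensitivity is a `b`-smooth upper bound: for adjacent streams `σ, σ'`,
`SS_{σ',b}(c) ≤ exp(b) · SS_{σ,b}(c)`. -/
theorem smoothSens_smooth {n : ℕ} (b : ℝ) (hb : 0 < b)
    (c : (Fin n → ℝ) → ℝ) (M : ℝ) (hM : ∀ σ : Fin n → ℝ, |c σ| ≤ M)
    (σ σ' : Fin n → ℝ) (hadj : hammingDist σ σ' = 1) :
    smoothSens b c σ' ≤ Real.exp b * smoothSens b c σ := by
  apply Real.sSup_le
  · rintro x ⟨τ, rfl⟩
    have hmem : localSens c τ * Real.exp (-(b * hammingDist σ τ)) ∈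
        {x : ℝ | ∃ σ'' : Fin n → ℝ,
          x = localSens c σ'' * Real.exp (-(b * hammingDist σ σ''))} := ⟨τ, rfl⟩
    have hle : localSens c τ * Real.exp (-(b * hammingDist σ τ)) ≤ smoothSens b c σ :=
      le_csSup (smoothSens_bddAbove b hb c M hM σ) hmem
    have htri : (hammingDist σ τ : ℝ) ≤ 1 + hammingDist σ' τ := by
      have := hammingDist_triangle σ σ' τ
      rw [hadj] at this
      exact_mod_cast this
    have hexp : Real.exp (-(b * hammingDist σ' τ)) ≤
        Real.exp b * Real.exp (-(b * hammingDist σ τ)) := by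
      rw [← Real.exp_add]
      apply Real.exp_le_exp.mpr
      nlinarith [hb.le]
    calc localSens c τ * Real.exp (-(b * hammingDist σ' τ))
        ≤ localSens c τ * (Real.exp b * Real.exp (-(b * hammingDist σ τ))) :=
          mul_le_mul_of_nonneg_left hexp (localSens_nonneg c τ)
      _ = Real.exp b * (localSens c τ * Real.exp (-(b * hammingDist σ τ))) := by ring
      _ ≤ Real.exp b * smoothSens b c σ :=
          mul_le_mul_of_nonneg_left hle (Real.exp_pos b).le
  · exact mul_nonneg (Real.exp_pos b).le (smoothSens_nonneg b c σ)
end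

section
/- (Minimality of smooth sensitivity) Let n be a natural number, b > 0, and let c : (Fin n → ℝ) → ℝ be a bounded function. Suppose S* : (Fin n → ℝ) → ℝ is any b-smooth upper bound on the local sensitivity of c, i.e. S*(σ) ≥ LS_σ(c) for all σ, and S*(σ) ≤ exp(b) · S*(σ') whenever d(σ, σ') = 1. Then S*(σ) ≥ SS_{σ,b}(c) for every stream σ. -/
lemma hamming_step {n : ℕ} {σ σ' : Fin n → ℝ} {k : ℕ}
    (h : hammingDist σ σ' = k + 1) :
    ∃ τ : Fin n → ℝ, hammingDist σ τ = k ∧ hammingDist τ σ' = 1 := by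
  have hne : ({i | σ i ≠ σ' i} : Finset (Fin n)).Nonempty := by
    rw [← Finset.card_pos, show ({i | σ i ≠ σ' i} : Finset (Fin n)).card = k + 1 from h]
    omega
  obtain ⟨i, hi⟩ := hne
  simp only [Finset.mem_filter, Finset.mem_univ, true_and] at hi
  refine ⟨Function.update σ' i (σ i), ?_, ?_⟩
  · have hset : ({j | σ j ≠ Function.update σ' i (σ i) j} : Finset (Fin n)) =
        ({j | σ j ≠ σ' j} : Finset (Fin n)).erase i := by
      ext j
      rcases eq_or_ne j i with rfl | hj
      · simp [Function.update]
      · simp [Function.update, hj]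
    have : hammingDist σ (Function.update σ' i (σ i)) =
        (({j | σ j ≠ σ' j} : Finset (Fin n)).erase i).card := by
      rw [hammingDist, hset]
    rw [this, Finset.card_erase_of_mem (by simpa using hi),
      show ({j | σ j ≠ σ' j} : Finset (Fin n)).card = k + 1 from h]
    omega
  · have hset : ({j | Function.update σ' i (σ i) j ≠ σ' j} : Finset (Fin n)) = {i} := by
      ext j
      rcases eq_or_ne j i with rfl | hj
      · simp [Function.update, hi]
      · simp [Function.update, hj]
    rw [hammingDist, hset, Finset.card_singleton]

/-- (Minimality of smooth sensitivity) Any `b`-smooth upper bound `S*` on the local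
sensitivity of `c` satisfies `S*(σ) ≥ SS_{σ,b}(c)` for every stream `σ`. -/
theorem smoothSens_minimal {n : ℕ} (b : ℝ) (hb : 0 < b)
    (c : (Fin n → ℝ) → ℝ) (M : ℝ) (hM : ∀ σ : Fin n → ℝ, |c σ| ≤ M)
    (Sstar : (Fin n → ℝ) → ℝ)
    (hub : ∀ σ : Fin n → ℝ, localSens c σ ≤ Sstar σ)
    (hsmooth : ∀ σ σ' : Fin n → ℝ, hammingDist σ σ' = 1 →
      Sstar σ ≤ Real.exp b * Sstar σ')
    (σ : Fin n → ℝ) :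
    smoothSens b c σ ≤ Sstar σ := by
  have hS0 : ∀ τ, 0 ≤ Sstar τ := fun τ => (localSens_nonneg c τ).trans (hub τ)
  have key : ∀ (k : ℕ) (σ σ' : Fin n → ℝ), hammingDist σ σ' = k →
      Sstar σ' ≤ Real.exp (b * k) * Sstar σ := by
    intro k
    induction k with
    | zero =>
      intro σ σ' h
      obtain rfl := hammingDist_eq_zero.mp h
      simp
    | succ k ih =>
      intro σ σ' h
      obtain ⟨τ, h1, h2⟩ := hamming_step h
      calc Sstar σ' ≤ Real.exp b * Sstar τ := hsmooth σ' τ (by rwa [hammingDist_comm])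
        _ ≤ Real.exp b * (Real.exp (b * k) * Sstar σ) := by
            exact mul_le_mul_of_nonneg_left (ih σ τ h1) (Real.exp_pos b).le
        _ = Real.exp (b * (k + 1 : ℕ)) * Sstar σ := by
            rw [← mul_assoc, ← Real.exp_add]; push_cast; ring_nf
  apply Real.sSup_le _ (hS0 σ)
  rintro x ⟨σ', rfl⟩
  calc localSens c σ' * Real.exp (-(b * hammingDist σ σ'))
      ≤ Sstar σ' * Real.exp (-(b * hammingDist σ σ')) :=
        mul_le_mul_of_nonneg_right (hub σ') (Real.exp_pos _).le
    _ ≤ (Real.exp (b * hammingDist σ σ') * Sstar σ) * Real.exp (-(b * hammingDist σ σ')) :=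
        mul_le_mul_of_nonneg_right (key _ σ σ' rfl) (Real.exp_pos _).le
    _ = Sstar σ := by rw [mul_comm (Real.exp _) (Sstar σ), mul_assoc, ← Real.exp_add]; simp
end

section
/- Let n be a natural number, b > 0, and let c : (Fin n → ℝ) → ℝ be a bounded function. Let S : (Fin n → ℝ) → ℝ be the function S(σ) = SS_{σ,b}(c). Then the b-smooth sensitivity of S itself is bounded: for every stream σ, SS_{σ,b}(S) ≤ (exp(b) − 1) · SS_{σ,b}(c). -/
namespace SmoothAux

variable {n : ℕ}

lemma localSens_nonneg (c : (Fin n → ℝ) → ℝ) (σ : Fin n → ℝ) : 0 ≤ localSens c σ :=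
  Real.sSup_nonneg (by rintro x ⟨σ', -, rfl⟩; positivity)

lemma localSens_le (c : (Fin n → ℝ) → ℝ) (M : ℝ) (hM : ∀ σ, |c σ| ≤ M)
    (σ : Fin n → ℝ) : localSens c σ ≤ 2 * M := by
  have hM0 : 0 ≤ M := (abs_nonneg _).trans (hM σ)
  apply Real.sSup_le
  · rintro x ⟨σ', -, rfl⟩
    calc |c σ - c σ'| ≤ |c σ| + |c σ'| := abs_sub _ _
      _ ≤ M + M := add_le_add (hM _) (hM _)
      _ = 2 * M := by ring
  · linarith

lemma exp_le_one (b : ℝ) (hb : 0 < b) (d : ℕ) :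
    Real.exp (-(b * (d : ℝ))) ≤ 1 := by
  rw [Real.exp_le_one_iff]
  have : (0:ℝ) ≤ b * d := mul_nonneg hb.le (Nat.cast_nonneg d)
  linarith

lemma smoothSens_bddAbove (b : ℝ) (hb : 0 < b) (c : (Fin n → ℝ) → ℝ) (M : ℝ)
    (hM : ∀ σ, |c σ| ≤ M) (σ : Fin n → ℝ) :
    BddAbove {x : ℝ | ∃ σ' : Fin n → ℝ, x = localSens c σ' * Real.exp (-(b * hammingDist σ σ'))} := by
  refine ⟨2 * M, ?_⟩
  rintro x ⟨σ', rfl⟩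
  calc localSens c σ' * Real.exp (-(b * hammingDist σ σ'))
      ≤ (2 * M) * 1 := by
        apply mul_le_mul (localSens_le c M hM σ') (exp_le_one b hb _)
          (Real.exp_pos _).le
        have hM0 : 0 ≤ M := (abs_nonneg _).trans (hM σ)
        linarith
    _ = 2 * M := mul_one _

lemma smoothSens_nonneg (b : ℝ) (c : (Fin n → ℝ) → ℝ) (σ : Fin n → ℝ) :
    0 ≤ smoothSens b c σ :=
  Real.sSup_nonneg (by
    rintro x ⟨σ', rfl⟩
    exact mul_nonneg (localSens_nonneg c σ') (Real.exp_pos _).le)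

/-- Key smoothness fact. -/
lemma smoothSens_smooth (b : ℝ) (hb : 0 < b) (c : (Fin n → ℝ) → ℝ) (M : ℝ)
    (hM : ∀ σ, |c σ| ≤ M) (σ τ : Fin n → ℝ) :
    smoothSens b c τ * Real.exp (-(b * hammingDist σ τ)) ≤ smoothSens b c σ := by
  have key : smoothSens b c τ ≤ smoothSens b c σ * Real.exp (b * hammingDist σ τ) := by
    apply Real.sSup_le
    · rintro x ⟨σ', rfl⟩
      have htri : (hammingDist σ σ' : ℝ) ≤ (hammingDist σ τ : ℝ) + (hammingDist τ σ' : ℝ) := by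
        exact_mod_cast hammingDist_triangle σ τ σ'
      have h1 : localSens c σ' * Real.exp (-(b * hammingDist τ σ'))
          ≤ (localSens c σ' * Real.exp (-(b * hammingDist σ σ'))) * Real.exp (b * hammingDist σ τ) := by
        rw [mul_assoc, ← Real.exp_add]
        apply mul_le_mul_of_nonneg_left _ (localSens_nonneg c σ')
        apply Real.exp_le_exp.2
        nlinarith [hb.le]
      have h2 : localSens c σ' * Real.exp (-(b * hammingDist σ σ')) ≤ smoothSens b c σ :=
        le_csSup (smoothSens_bddAbove b hb c M hM σ) ⟨σ', rfl⟩
      calc localSens c σ' * Real.exp (-(b * hammingDist τ σ'))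
          ≤ (localSens c σ' * Real.exp (-(b * hammingDist σ σ'))) * Real.exp (b * hammingDist σ τ) := h1
        _ ≤ smoothSens b c σ * Real.exp (b * hammingDist σ τ) :=
            mul_le_mul_of_nonneg_right h2 (Real.exp_pos _).le
    · exact mul_nonneg (smoothSens_nonneg b c σ) (Real.exp_pos _).le
  calc smoothSens b c τ * Real.exp (-(b * hammingDist σ τ))
      ≤ (smoothSens b c σ * Real.exp (b * hammingDist σ τ)) * Real.exp (-(b * hammingDist σ τ)) :=
        mul_le_mul_of_nonneg_right key (Real.exp_pos _).le
    _ = smoothSens b c σ := by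
        rw [mul_assoc, ← Real.exp_add, add_neg_cancel, Real.exp_zero, mul_one]

lemma localSens_smoothSens_le (b : ℝ) (hb : 0 < b) (c : (Fin n → ℝ) → ℝ) (M : ℝ)
    (hM : ∀ σ, |c σ| ≤ M) (τ : Fin n → ℝ) :
    localSens (fun ρ => smoothSens b c ρ) τ ≤ (Real.exp b - 1) * smoothSens b c τ := by
  have hexp1 : (1:ℝ) ≤ Real.exp b := by
    have := Real.add_one_le_exp b; linarith
  have hSτ := smoothSens_nonneg b c τ
  have hRHS : 0 ≤ (Real.exp b - 1) * smoothSens b c τ :=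
    mul_nonneg (by linarith) hSτ
  apply Real.sSup_le _ hRHS
  rintro x ⟨σ', hd, rfl⟩
  -- adjacency bounds in both directions
  have hd' : hammingDist σ' τ = 1 := by rw [hammingDist_comm]; exact hd
  have hb1 : smoothSens b c τ * Real.exp (-b) ≤ smoothSens b c σ' := by
    have := smoothSens_smooth b hb c M hM σ' τ
    rwa [hd', Nat.cast_one, mul_one] at this
  have hb2 : smoothSens b c σ' * Real.exp (-b) ≤ smoothSens b c τ := by
    have := smoothSens_smooth b hb c M hM τ σ'
    rwa [hd, Nat.cast_one, mul_one] at this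
  have hSσ' := smoothSens_nonneg b c σ'
  have hen : Real.exp (-b) * Real.exp b = 1 := by
    rw [← Real.exp_add, neg_add_cancel, Real.exp_zero]
  -- from hb1: S τ ≤ exp b * S σ'; from hb2: S σ' ≤ exp b * S τ
  have h1 : smoothSens b c τ ≤ Real.exp b * smoothSens b c σ' := by
    nlinarith [Real.exp_pos b, Real.exp_pos (-b)]
  have h2 : smoothSens b c σ' ≤ Real.exp b * smoothSens b c τ := by
    nlinarith [Real.exp_pos b, Real.exp_pos (-b)]
  rw [abs_sub_le_iff]
  constructor
  · rcases le_total (smoothSens b c σ') (smoothSens b c τ) with hle | hle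
    · nlinarith
    · nlinarith
  · nlinarith

end SmoothAux

/-- The `b`-smooth sensitivity of the function `σ ↦ SS_{σ,b}(c)` itself is bounded by
`(exp(b) − 1) · SS_{σ,b}(c)`. -/
theorem smoothSens_of_smoothSens {n : ℕ} (b : ℝ) (hb : 0 < b)
    (c : (Fin n → ℝ) → ℝ) (M : ℝ) (hM : ∀ σ : Fin n → ℝ, |c σ| ≤ M)
    (σ : Fin n → ℝ) :
    smoothSens b (fun τ => smoothSens b c τ) σ ≤ (Real.exp b - 1) * smoothSens b c σ := by
  have hexp1 : (1:ℝ) ≤ Real.exp b := by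
    have := Real.add_one_le_exp b; linarith
  have hRHS : 0 ≤ (Real.exp b - 1) * smoothSens b c σ :=
    mul_nonneg (by linarith) (SmoothAux.smoothSens_nonneg b c σ)
  apply Real.sSup_le _ hRHS
  rintro x ⟨τ, rfl⟩
  calc localSens (fun ρ => smoothSens b c ρ) τ * Real.exp (-(b * hammingDist σ τ))
      ≤ ((Real.exp b - 1) * smoothSens b c τ) * Real.exp (-(b * hammingDist σ τ)) :=
        mul_le_mul_of_nonneg_right
          (SmoothAux.localSens_smoothSens_le b hb c M hM τ) (Real.exp_pos _).le
    _ = (Real.exp b - 1) * (smoothSens b c τ * Real.exp (-(b * hammingDist σ τ))) := by ring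
    _ ≤ (Real.exp b - 1) * smoothSens b c σ :=
        mul_le_mul_of_nonneg_left
          (SmoothAux.smoothSens_smooth b hb c M hM σ τ) (by linarith)
end

section
/- (Light-tailed Chernoff bound on the outlier error) Let (Ω, 𝓕, ℙ) be a probability space, n a positive natural number, 0 < q ≤ 1, γ > 0, and let E₁, …, E_n : Ω → ℝ be independent identically distributed random variables each with law the mixture (1 − q)·δ_0 + q·Exp(γ). Then for every h with 0 < h < γ and every α ∈ ℝ, ℙ(∑_{i=1}^n Eᵢ ≥ α) ≤ (1 + q·h/(γ − h))^n / exp(h·α). -/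
open MeasureTheory ProbabilityTheory Real Set

lemma integral_exp_neg_mul_Ioi_zero {b : ℝ} (hb : 0 < b) :
    ∫ x in Ioi (0:ℝ), Real.exp (-(b * x)) = 1 / b := by
  have := integral_rpow_mul_exp_neg_mul_Ioi (a := 1) zero_lt_one hb
  simpa [Real.Gamma_one] using this

lemma lint_exp_expMeasure {γ h : ℝ} (hγ : 0 < γ) (hh0 : 0 < h) (hhγ : h < γ) :
    ∫⁻ x, ENNReal.ofReal (Real.exp (h * x)) ∂(expMeasure γ) =
      ENNReal.ofReal (γ / (γ - h)) := by
  have hb : 0 < γ - h := sub_pos.2 hhγ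
  have hmeas : Measurable fun x : ℝ => ENNReal.ofReal (Real.exp (h * x)) :=
    (Real.measurable_exp.comp (measurable_const.mul measurable_id)).ennreal_ofReal
  have hpdf : Measurable (exponentialPDF γ) :=
    (measurable_exponentialPDFReal γ).ennreal_ofReal
  have hexp : expMeasure γ = volume.withDensity (exponentialPDF γ) := rfl
  rw [hexp, lintegral_withDensity_eq_lintegral_mul _ hpdf hmeas]
  set g : ℝ → ℝ := Set.indicator (Ici (0:ℝ)) (fun x => γ * Real.exp (-((γ - h) * x))) with hg
  have hgeq : (exponentialPDF γ * fun x => ENNReal.ofReal (Real.exp (h * x)))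
      = fun x => ENNReal.ofReal (g x) := by
    funext x
    simp only [Pi.mul_apply, exponentialPDF_eq, hg]
    by_cases hx : 0 ≤ x
    · rw [if_pos hx, ← ENNReal.ofReal_mul (by positivity)]
      simp only [Set.indicator, mem_Ici, hx, if_true]
      congr 1
      rw [mul_assoc, ← Real.exp_add]
      ring_nf
    · rw [if_neg hx]
      simp [Set.indicator, hx]
  have hgint : Integrable g := by
    rw [hg, integrable_indicator_iff measurableSet_Ici, integrableOn_Ici_iff_integrableOn_Ioi]
    have := (exp_neg_integrableOn_Ioi 0 hb).const_mul γ
    have heq : (fun x : ℝ => γ * rexp (-(γ - h) * x)) = fun x => γ * rexp (-((γ - h) * x)) := by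
      funext x; rw [neg_mul]
    rw [← heq]
    exact this
  have hgnn : 0 ≤ g := by
    intro x
    apply Set.indicator_nonneg
    intro y _
    positivity
  rw [hgeq, ← ofReal_integral_eq_lintegral_ofReal hgint (Filter.Eventually.of_forall hgnn)]
  congr 1
  rw [hg, integral_indicator measurableSet_Ici, integral_Ici_eq_integral_Ioi,
    integral_const_mul, integral_exp_neg_mul_Ioi_zero hb]
  field_simp

/-- (Light-tailed Chernoff bound on the outlier error) For i.i.d. `E₁, …, E_n` each with
law the mixture `(1 − q)·δ₀ + q·Exp(γ)`, for every `0 < h < γ` and every `α`,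
`P(∑ Eᵢ ≥ α) ≤ (1 + q·h/(γ − h))^n / exp(h·α)`. -/
theorem light_tailed_chernoff {Ω : Type*} [MeasurableSpace Ω] (P : Measure Ω)
    [IsProbabilityMeasure P] (n : ℕ) (hn : 0 < n)
    (q γ : ℝ) (hq0 : 0 < q) (hq1 : q ≤ 1) (hγ : 0 < γ)
    (E : Fin n → Ω → ℝ) (hmeas : ∀ i, Measurable (E i))
    (hindep : iIndepFun E P)
    (hlaw : ∀ i, Measure.map (E i) P =
      ENNReal.ofReal (1 - q) • Measure.dirac (0 : ℝ) +
        ENNReal.ofReal q • ProbabilityTheory.expMeasure γ)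
    (h α : ℝ) (hh0 : 0 < h) (hhγ : h < γ) :
    P {ω | (∑ i, E i ω) ≥ α} ≤
      ENNReal.ofReal ((1 + q * h / (γ - h)) ^ n / Real.exp (h * α)) := by
  have hb : 0 < γ - h := sub_pos.2 hhγ
  set c : ℝ := 1 + q * h / (γ - h) with hc
  have hc1 : 1 ≤ c := by
    rw [hc]; nlinarith [div_nonneg (mul_nonneg hq0.le hh0.le) hb.le]
  have hc0 : 0 < c := lt_of_lt_of_le one_pos hc1
  have hmeasf : Measurable fun x : ℝ => ENNReal.ofReal (Real.exp (h * x)) :=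
    (Real.measurable_exp.comp (measurable_const.mul measurable_id)).ennreal_ofReal
  -- lintegral of exp(h E i) over P
  have hlint : ∀ i, ∫⁻ ω, ENNReal.ofReal (Real.exp (h * E i ω)) ∂P = ENNReal.ofReal c := by
    intro i
    have : ∫⁻ ω, ENNReal.ofReal (Real.exp (h * E i ω)) ∂P
        = ∫⁻ x, ENNReal.ofReal (Real.exp (h * x)) ∂(Measure.map (E i) P) :=
      (lintegral_map hmeasf (hmeas i)).symm
    rw [this, hlaw i, lintegral_add_measure, lintegral_smul_measure, lintegral_smul_measure,
      lintegral_dirac, lint_exp_expMeasure hγ hh0 hhγ]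
    rw [mul_zero, Real.exp_zero, smul_eq_mul, smul_eq_mul, ← ENNReal.ofReal_mul (by linarith),
      ← ENNReal.ofReal_mul (by linarith), ← ENNReal.ofReal_add (by nlinarith)
      (by positivity), hc]
    congr 1
    field_simp
    ring
  have hint : ∀ i, Integrable (fun ω => Real.exp (h * E i ω)) P := by
    intro i
    refine ⟨(Real.measurable_exp.comp ((hmeas i).const_mul h)).aestronglyMeasurable, ?_⟩
    rw [hasFiniteIntegral_iff_ofReal (Filter.Eventually.of_forall fun ω => (Real.exp_pos _).le)]
    rw [hlint i]
    exact ENNReal.ofReal_lt_top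
  have hmgf : ∀ i, mgf (E i) P h = c := by
    intro i
    rw [mgf, integral_eq_lintegral_of_nonneg_ae
      (Filter.Eventually.of_forall fun ω => (Real.exp_pos _).le)
      (hint i).aestronglyMeasurable, hlint i, ENNReal.toReal_ofReal hc0.le]
  have hXmeas : Measurable (∑ i, E i) := by
    have : (∑ i, E i) = fun ω => ∑ i, E i ω := by funext ω; simp
    rw [this]
    exact Finset.measurable_sum Finset.univ fun i _ => hmeas i
  have hintsum : Integrable (fun ω => Real.exp (h * (∑ i, E i) ω)) P :=
    hindep.integrable_exp_mul_sum hmeas (fun i _ => hint i)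
  have hch := measure_ge_le_exp_mul_mgf (μ := P) (X := ∑ i, E i) (t := h) α hh0.le hintsum
  rw [hindep.mgf_sum hmeas Finset.univ] at hch
  have hprod : ∏ i : Fin n, mgf (E i) P h = c ^ n := by
    simp [hmgf]
  rw [hprod] at hch
  have hset : {ω | (∑ i, E i ω) ≥ α} = {ω | α ≤ (∑ i, E i) ω} := by
    ext ω; simp [ge_iff_le]
  rw [hset, ← ENNReal.ofReal_toReal (measure_ne_top P _)]
  apply ENNReal.ofReal_le_ofReal
  refine hch.trans (le_of_eq ?_)
  rw [div_eq_mul_inv, mul_comm, neg_mul, Real.exp_neg]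
end

section
/- (Optimal choice of the Chernoff parameter) Let γ > 0, L > 0, 0 < q ≤ 1, and let n be a positive natural number. Set s = √(q·n/L) and h = γ/(s + 1), so that 0 < h < γ. Then n·q/(γ − h) + L/h = (√(q·n) + √L)² / γ. Consequently, since ln(1 + x) ≤ x for x > −1, the Chernoff exponent satisfies (n·ln(1 + q·h/(γ − h)) + L) / h ≤ (√(q·n) + √L)² / γ. -/
/-- (Optimal choice of the Chernoff parameter) With `s = √(q·n/L)` and `h = γ/(s + 1)`
we have `0 < h < γ`, the identity `n·q/(γ − h) + L/h = (√(q·n) + √L)²/γ`, and the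
Chernoff exponent bound `(n·ln(1 + q·h/(γ − h)) + L)/h ≤ (√(q·n) + √L)²/γ`. -/
theorem optimal_chernoff_parameter (γ L q : ℝ) (hγ : 0 < γ) (hL : 0 < L)
    (hq0 : 0 < q) (hq1 : q ≤ 1) (n : ℕ) (hn : 0 < n)
    (s h : ℝ) (hs : s = Real.sqrt (q * n / L)) (hh : h = γ / (s + 1)) :
    (0 < h ∧ h < γ) ∧
    n * q / (γ - h) + L / h = (Real.sqrt (q * n) + Real.sqrt L) ^ 2 / γ ∧
    (n * Real.log (1 + q * h / (γ - h)) + L) / h ≤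
      (Real.sqrt (q * n) + Real.sqrt L) ^ 2 / γ := by
  have hqn : (0:ℝ) < q * n := by positivity
  set a := Real.sqrt (q * n) with ha
  set b := Real.sqrt L with hb
  have ha0 : 0 < a := Real.sqrt_pos.2 hqn
  have hb0 : 0 < b := Real.sqrt_pos.2 hL
  have ha2 : a ^ 2 = q * n := Real.sq_sqrt hqn.le
  have hb2 : b ^ 2 = L := Real.sq_sqrt hL.le
  have hsab : s = a / b := by rw [hs, Real.sqrt_div hqn.le]
  have hs0 : 0 < s := by rw [hsab]; positivity
  have hs1 : 0 < s + 1 := by linarith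
  have hpos : 0 < h := by rw [hh]; positivity
  have hlt : h < γ := by
    rw [hh, div_lt_iff₀ hs1]
    nlinarith
  have hγh : 0 < γ - h := by linarith
  have key : n * q / (γ - h) + L / h = (a + b) ^ 2 / γ := by
    have hγmh : γ - h = γ * s / (s + 1) := by
      rw [hh]; field_simp; ring
    rw [hγmh, hh, hsab]
    have hnq : (n : ℝ) * q = a ^ 2 := by rw [ha2]; ring
    rw [hnq, ← hb2]
    field_simp
  refine ⟨⟨hpos, hlt⟩, key, ?_⟩
  rw [← key]
  have hx : 0 ≤ q * h / (γ - h) := by positivity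
  have hlog : Real.log (1 + q * h / (γ - h)) ≤ q * h / (γ - h) := by
    have := Real.add_one_le_exp (q * h / (γ - h))
    calc Real.log (1 + q * h / (γ - h)) ≤ Real.log (Real.exp (q * h / (γ - h))) := by
          apply Real.log_le_log (by linarith) (by linarith)
      _ = q * h / (γ - h) := Real.log_exp _
  have h1 : (n : ℝ) * Real.log (1 + q * h / (γ - h)) ≤ n * (q * h / (γ - h)) :=
    mul_le_mul_of_nonneg_left hlog (Nat.cast_nonneg n)
  have h2 : ((n : ℝ) * (q * h / (γ - h)) + L) / h = n * q / (γ - h) + L / h := by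
    field_simp
  calc ((n : ℝ) * Real.log (1 + q * h / (γ - h)) + L) / h
      ≤ ((n : ℝ) * (q * h / (γ - h)) + L) / h := by gcongr
    _ = _ := h2
end
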